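/- Let C be a cartesian category and G an internal group such that G* : C → [G, C] has a left adjoint Σ_G and the adjunction Σ_G ⊣ G* satisfies Frobenius reciprocity. Let L ⊣ R : C ⇄ [G, C] be an adjunction over C (i.e. Σ_G ∘ L = Id_C) which satisfies Frobenius reciprocity, and write (P, p) for the G-object L(1). Then R(G, m) ≅ P, and the morphism (p, π₂) : G × P → P × P of C is an isomorphism. -/

import Mathlib

open CategoryTheory CategoryTheory.Limits

universe v u v₂ u₂ v₃ u₃

noncomputable section

namespace PrincipalBundles

attribute [local simp] prod.lift_fst prod.lift_snd prod.lift_fst_assoc prod.lift_snd_assoc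

variable {C : Type u} [Category.{v} C] [HasFiniteLimits C]

/-- An internal group in a cartesian category `C`: an object `G` with multiplication
`m : G ⨯ G ⟶ G`, unit `e : 1 ⟶ G` and inverse `i : G ⟶ G` satisfying the group axioms. -/
structure InternalGroup (C : Type u) [Category.{v} C] [HasFiniteLimits C] where
  G : C
  m : G ⨯ G ⟶ G
  e : ⊤_ C ⟶ G
  i : G ⟶ G
  mul_assoc' : (prod.associator G G G).inv ≫ prod.map m (𝟙 G) ≫ m = prod.map (𝟙 G) m ≫ m
  one_mul' : prod.lift (terminal.from G ≫ e) (𝟙 G) ≫ m = 𝟙 G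
  mul_one' : prod.lift (𝟙 G) (terminal.from G ≫ e) ≫ m = 𝟙 G
  inv_mul' : prod.lift i (𝟙 G) ≫ m = terminal.from G ≫ e
  mul_inv' : prod.lift (𝟙 G) i ≫ m = terminal.from G ≫ e

namespace InternalGroup

variable (Gr : InternalGroup C)

/-- Multiplication of generalized elements. -/
theorem one_mul_elt {T : C} (b : T ⟶ Gr.G) :
    prod.lift (terminal.from T ≫ Gr.e) b ≫ Gr.m = b := by
  have h : prod.lift (terminal.from T ≫ Gr.e) b
      = b ≫ prod.lift (terminal.from Gr.G ≫ Gr.e) (𝟙 Gr.G) := by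
    rw [prod.comp_lift, ← Category.assoc, terminal.comp_from, Category.comp_id]
  rw [h, Category.assoc, Gr.one_mul', Category.comp_id]

theorem mul_one_elt {T : C} (a : T ⟶ Gr.G) :
    prod.lift a (terminal.from T ≫ Gr.e) ≫ Gr.m = a := by
  have h : prod.lift a (terminal.from T ≫ Gr.e)
      = a ≫ prod.lift (𝟙 Gr.G) (terminal.from Gr.G ≫ Gr.e) := by
    rw [prod.comp_lift, ← Category.assoc, terminal.comp_from, Category.comp_id]
  rw [h, Category.assoc, Gr.mul_one', Category.comp_id]

theorem mul_assoc_elt {T : C} (a b c : T ⟶ Gr.G) :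
    prod.lift (prod.lift a b ≫ Gr.m) c ≫ Gr.m = prod.lift a (prod.lift b c ≫ Gr.m) ≫ Gr.m := by
  have h1 : prod.lift (prod.lift a b ≫ Gr.m) c
      = prod.lift (prod.lift a b) c ≫ prod.map Gr.m (𝟙 _) := by simp
  have h2 : prod.lift (prod.lift a b) c
      = prod.lift a (prod.lift b c) ≫ (prod.associator Gr.G Gr.G Gr.G).inv := by
    ext <;> simp
  have h3 : prod.lift a (prod.lift b c ≫ Gr.m)
      = prod.lift a (prod.lift b c) ≫ prod.map (𝟙 _) Gr.m := by simp
  rw [h1, h2, h3, Category.assoc, Category.assoc, Gr.mul_assoc', ← Category.assoc]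

theorem inv_mul_elt {T : C} (a : T ⟶ Gr.G) :
    prod.lift (a ≫ Gr.i) a ≫ Gr.m = terminal.from T ≫ Gr.e := by
  have h : prod.lift (a ≫ Gr.i) a = a ≫ prod.lift Gr.i (𝟙 Gr.G) := by
    rw [prod.comp_lift, Category.comp_id]
  rw [h, Category.assoc, Gr.inv_mul', ← Category.assoc, terminal.comp_from]

theorem mul_inv_elt {T : C} (a : T ⟶ Gr.G) :
    prod.lift a (a ≫ Gr.i) ≫ Gr.m = terminal.from T ≫ Gr.e := by
  have h : prod.lift a (a ≫ Gr.i) = a ≫ prod.lift (𝟙 Gr.G) Gr.i := by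
    rw [prod.comp_lift, Category.comp_id]
  rw [h, Category.assoc, Gr.mul_inv', ← Category.assoc, terminal.comp_from]

/-- The monad `X ↦ G ⨯ X` on `C` associated to an internal group `G`; its unit at `X` is
`(e ∘ !, id) : X ⟶ G ⨯ X` and its multiplication at `X` is `m ⨯ id : G ⨯ (G ⨯ X) ⟶ G ⨯ X`. -/
def actionMonad : Monad C where
  toFunctor := prod.functor.obj Gr.G
  η :=
    { app := fun X => prod.lift (terminal.from X ≫ Gr.e) (𝟙 X)
      naturality := by
        intro X Y f
        dsimp [prod.functor]
        ext
        · simp [← Category.assoc, terminal.comp_from]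
        · simp }
  μ :=
    { app := fun X => (prod.associator Gr.G Gr.G X).inv ≫ prod.map Gr.m (𝟙 X)
      naturality := by
        intro X Y f
        dsimp [prod.functor]
        ext
        · simp [prod.comp_lift_assoc]
        · simp }
  assoc := by
    intro X
    dsimp [prod.functor]
    ext
    · simp only [prod.comp_lift_assoc, Category.assoc, prod.map_fst, prod.map_snd,
        prod.lift_fst, prod.lift_snd, Category.comp_id, Category.id_comp,
        prod.associator_inv, prod.lift_fst_assoc, prod.comp_lift, prod.map_fst_assoc,
        prod.map_snd_assoc, prod.lift_snd_assoc]
      exact (Gr.mul_assoc_elt _ _ _).symm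
    · simp
  left_unit := by
    intro X
    dsimp [prod.functor]
    ext
    · simp [prod.comp_lift_assoc, Gr.one_mul_elt]
    · simp
  right_unit := by
    intro X
    dsimp [prod.functor]
    ext
    · simp only [prod.comp_lift_assoc, Category.assoc, prod.map_fst, prod.map_snd,
        prod.lift_fst, prod.lift_snd, Category.comp_id, Category.id_comp,
        prod.associator_inv, prod.lift_fst_assoc]
      simp only [prod.map_snd_assoc, prod.lift_fst_assoc, Category.assoc, prod.lift_fst]
      rw [← Category.assoc prod.snd, terminal.comp_from]
      exact Gr.mul_one_elt prod.fst
    · simp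

/-- The category `[G, C]` of `G`-objects and `G`-homomorphisms: objects of `C` equipped with
a `G`-action `a : G ⨯ A ⟶ A` satisfying the unit and associativity laws, with morphisms the
morphisms of `C` commuting with the actions.  (Implemented as the Eilenberg–Moore category of
the monad `G ⨯ (-)`; the algebra axioms are literally the action axioms, and algebra morphisms
are literally the `G`-homomorphisms.) -/
abbrev GObject := (actionMonad Gr).Algebra

instance : HasFiniteLimits (GObject Gr) :=
  ⟨fun _ _ _ => ⟨fun D => Monad.hasLimit_of_comp_forget_hasLimit D⟩⟩

variable {Gr}

/-- The action of a `G`-object, seen as a morphism `G ⨯ A ⟶ A` in `C`. -/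
def act (A : GObject Gr) : Gr.G ⨯ A.A ⟶ A.A := A.a

/-- Elementwise unit law for an action. -/
theorem act_one_elt (A : GObject Gr) {T : C} (y : T ⟶ A.A) :
    prod.lift (terminal.from T ≫ Gr.e) y ≫ act A = y := by
  have h : prod.lift (terminal.from T ≫ Gr.e) y
      = y ≫ prod.lift (terminal.from A.A ≫ Gr.e) (𝟙 A.A) := by
    rw [prod.comp_lift, ← Category.assoc, terminal.comp_from, Category.comp_id]
  have hu := A.unit
  dsimp [actionMonad] at hu
  rw [h, Category.assoc, act]
  erw [hu]
  rw [Category.comp_id]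

/-- Elementwise associativity law for an action. -/
theorem act_assoc_elt (A : GObject Gr) {T : C} (a b : T ⟶ Gr.G) (y : T ⟶ A.A) :
    prod.lift (prod.lift a b ≫ Gr.m) y ≫ act A
      = prod.lift a (prod.lift b y ≫ act A) ≫ act A := by
  have ha : (prod.associator Gr.G Gr.G A.A).inv ≫ prod.map Gr.m (𝟙 A.A) ≫ A.a
      = prod.map (𝟙 Gr.G) A.a ≫ A.a := by
    have ha0 := A.assoc
    dsimp [actionMonad, prod.functor] at ha0
    simp only [Category.assoc] at ha0
    exact ha0
  have h1 : prod.lift (prod.lift a b ≫ Gr.m) y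
      = prod.lift (prod.lift a b) y ≫ prod.map Gr.m (𝟙 _) := by simp
  have h2 : prod.lift (prod.lift a b) y
      = prod.lift a (prod.lift b y) ≫ (prod.associator Gr.G Gr.G A.A).inv := by
    ext <;> simp
  have h3 : prod.lift a (prod.lift b y ≫ act A)
      = prod.lift a (prod.lift b y) ≫ prod.map (𝟙 _) (act A) := by simp
  rw [h1, h2, h3, Category.assoc, Category.assoc, act]
  erw [ha]
  exact (Category.assoc _ _ _).symm

variable (Gr)

/-- The functor `G* : C ⥤ [G, C]` equipping an object with the trivial action `π₂`. -/
def trivAction : C ⥤ GObject Gr where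
  obj X :=
    { A := X
      a := prod.snd
      unit := by simp [actionMonad]; exact prod.lift_snd _ _
      assoc := by simp [actionMonad, prod.functor] }
  map f :=
    { f := f
      h := by simp [actionMonad, prod.functor] }
  map_id X := by ext; rfl
  map_comp f g := by ext; rfl

/-- The `G`-object `(G, m)`: `G` acting on itself by multiplication. -/
def selfAction : GObject Gr where
  A := Gr.G
  a := Gr.m
  unit := Gr.one_mul'
  assoc := by
    have h := Gr.mul_assoc'
    dsimp [actionMonad, prod.functor]
    simpa [Category.assoc] using h

/-- The product of two `G`-objects: the product in `C` with the componentwise action. -/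
def prodGObject (A B : GObject Gr) : GObject Gr where
  A := A.A ⨯ B.A
  a := prod.lift (prod.map (𝟙 Gr.G) (prod.fst : A.A ⨯ B.A ⟶ A.A) ≫ act A)
    (prod.map (𝟙 Gr.G) (prod.snd : A.A ⨯ B.A ⟶ B.A) ≫ act B)
  unit := by
    show prod.lift (terminal.from (A.A ⨯ B.A) ≫ Gr.e) (𝟙 (A.A ⨯ B.A)) ≫
      prod.lift (prod.map (𝟙 Gr.G) (prod.fst : A.A ⨯ B.A ⟶ A.A) ≫ act A)
        (prod.map (𝟙 Gr.G) (prod.snd : A.A ⨯ B.A ⟶ B.A) ≫ act B) = 𝟙 _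
    apply Limits.prod.hom_ext
    · simp only [Category.assoc, prod.lift_fst, prod.lift_map_assoc, Category.comp_id,
        Category.id_comp]
      exact act_one_elt A prod.fst
    · simp only [Category.assoc, prod.lift_snd, prod.lift_map_assoc, Category.comp_id,
        Category.id_comp]
      exact act_one_elt B prod.snd
  assoc := by
    dsimp [actionMonad, prod.functor]
    apply Limits.prod.hom_ext
    · simp only [prod.comp_lift_assoc, Category.assoc, prod.map_fst, prod.map_snd,
        prod.lift_fst, prod.lift_snd, Category.comp_id, Category.id_comp,
        prod.associator_inv, prod.lift_fst_assoc, prod.comp_lift, prod.map_fst_assoc,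
        prod.map_snd_assoc, prod.lift_snd_assoc, prod.map_map_assoc, prod.map_map]
      rw [prod.lift_map_assoc]
      have hR : prod.map (𝟙 Gr.G) (prod.map (𝟙 Gr.G) (prod.fst : A.A ⨯ B.A ⟶ A.A) ≫ act A) ≫
              act A
          = prod.lift (prod.fst : Gr.G ⨯ (Gr.G ⨯ (A.A ⨯ B.A)) ⟶ Gr.G)
              (prod.lift ((prod.snd : Gr.G ⨯ (Gr.G ⨯ (A.A ⨯ B.A)) ⟶ Gr.G ⨯ (A.A ⨯ B.A)) ≫
                  prod.fst)
                ((prod.snd ≫ prod.snd) ≫ prod.fst) ≫ act A) ≫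
            act A := by
        congr 1
        apply Limits.prod.hom_ext
        · simp
        · simp only [prod.map_snd, prod.lift_snd]
          rw [← Category.assoc]
          congr 1
          apply Limits.prod.hom_ext <;> simp
      rw [hR]
      exact act_assoc_elt A prod.fst (prod.snd ≫ prod.fst) ((prod.snd ≫ prod.snd) ≫ prod.fst)
    · simp only [prod.comp_lift_assoc, Category.assoc, prod.map_fst, prod.map_snd,
        prod.lift_fst, prod.lift_snd, Category.comp_id, Category.id_comp,
        prod.associator_inv, prod.lift_fst_assoc, prod.comp_lift, prod.map_fst_assoc,
        prod.map_snd_assoc, prod.lift_snd_assoc, prod.map_map_assoc, prod.map_map]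
      rw [prod.lift_map_assoc]
      have hR : prod.map (𝟙 Gr.G) (prod.map (𝟙 Gr.G) (prod.snd : A.A ⨯ B.A ⟶ B.A) ≫ act B) ≫
              act B
          = prod.lift (prod.fst : Gr.G ⨯ (Gr.G ⨯ (A.A ⨯ B.A)) ⟶ Gr.G)
              (prod.lift ((prod.snd : Gr.G ⨯ (Gr.G ⨯ (A.A ⨯ B.A)) ⟶ Gr.G ⨯ (A.A ⨯ B.A)) ≫
                  prod.fst)
                ((prod.snd ≫ prod.snd) ≫ prod.snd) ≫ act B) ≫
            act B := by
        congr 1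
        apply Limits.prod.hom_ext
        · simp
        · simp only [prod.map_snd, prod.lift_snd]
          rw [← Category.assoc]
          congr 1
          apply Limits.prod.hom_ext <;> simp
      rw [hR]
      exact act_assoc_elt B prod.fst (prod.snd ≫ prod.fst) ((prod.snd ≫ prod.snd) ≫ prod.snd)

variable {Gr}

/-- First projection of the product of `G`-objects. -/
def prodGFst (A B : GObject Gr) : prodGObject Gr A B ⟶ A where
  f := prod.fst
  h := by simp [prodGObject, actionMonad, prod.functor, act]

/-- Second projection of the product of `G`-objects. -/
def prodGSnd (A B : GObject Gr) : prodGObject Gr A B ⟶ B where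
  f := prod.snd
  h := by simp [prodGObject, actionMonad, prod.functor, act]

/-- Functoriality of the product of `G`-objects. -/
def prodGHom {A A' B B' : GObject Gr} (u : A ⟶ A') (v : B ⟶ B') :
    prodGObject Gr A B ⟶ prodGObject Gr A' B' where
  f := prod.map u.f v.f
  h := by
    have hu : prod.map (𝟙 Gr.G) u.f ≫ act A' = act A ≫ u.f := by
      have h0 := u.h; dsimp [actionMonad, prod.functor] at h0; exact h0
    have hv : prod.map (𝟙 Gr.G) v.f ≫ act B' = act B ≫ v.f := by
      have h0 := v.h; dsimp [actionMonad, prod.functor] at h0; exact h0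
    dsimp [prodGObject, actionMonad, prod.functor]
    apply Limits.prod.hom_ext
    · simp only [Category.assoc, prod.lift_fst, prod.map_fst, prod.lift_fst_assoc]
      rw [← Category.assoc, prod.map_map, Category.id_comp, prod.map_fst]
      rw [show prod.map (𝟙 Gr.G) (prod.fst ≫ u.f)
            = prod.map (𝟙 Gr.G) prod.fst ≫ prod.map (𝟙 Gr.G) u.f by
          rw [prod.map_map, Category.comp_id]]
      rw [Category.assoc, hu]
    · simp only [Category.assoc, prod.lift_snd, prod.map_snd, prod.lift_snd_assoc]
      rw [← Category.assoc, prod.map_map, Category.id_comp, prod.map_snd]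
      rw [show prod.map (𝟙 Gr.G) (prod.snd ≫ v.f)
            = prod.map (𝟙 Gr.G) prod.snd ≫ prod.map (𝟙 Gr.G) v.f by
          rw [prod.map_map, Category.comp_id]]
      rw [Category.assoc, hv]

variable (Gr)

/-- The functor `(P, p) ⨯ (-) : [G, C] ⥤ [G, C]`. -/
def prodGFunctor (P : GObject Gr) : GObject Gr ⥤ GObject Gr where
  obj A := prodGObject Gr P A
  map h := prodGHom (𝟙 P) h
  map_id A := by
    apply Monad.Algebra.Hom.ext
    show prod.map (𝟙 P : P ⟶ P).f (𝟙 A : A ⟶ A).f = (𝟙 (prodGObject Gr P A) : _ ⟶ _).f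
    rw [Monad.Algebra.id_f, Monad.Algebra.id_f, Monad.Algebra.id_f, prod.map_id_id]
    rfl
  map_comp f g := by
    apply Monad.Algebra.Hom.ext
    show prod.map (𝟙 P : P ⟶ P).f (f ≫ g).f = (prodGHom (𝟙 P) f ≫ prodGHom (𝟙 P) g).f
    rw [Monad.Algebra.comp_f, Monad.Algebra.comp_f]
    show prod.map (𝟙 P : P ⟶ P).f (f.f ≫ g.f)
        = prod.map (𝟙 P : P ⟶ P).f f.f ≫ prod.map (𝟙 P : P ⟶ P).f g.f
    rw [prod.map_map]
    rw [Monad.Algebra.id_f, Category.comp_id]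

end InternalGroup

open InternalGroup

section Frobenius

variable {D : Type u₂} [Category.{v₂} D] [HasFiniteLimits D]
variable {E : Type u₃} [Category.{v₃} E] [HasFiniteLimits E]

/-- The canonical Frobenius map `L(R X ⨯ W) ⟶ X ⨯ L W` of an adjunction `L ⊣ R`, namely
`(L π₁, L π₂)` followed by `ε_X ⨯ id` where `ε` is the counit. -/
def frobMap {L : D ⥤ E} {R : E ⥤ D} (adj : L ⊣ R) (W : D) (X : E) :
    L.obj (R.obj X ⨯ W) ⟶ X ⨯ L.obj W :=
  prod.lift (L.map prod.fst ≫ adj.counit.app X) (L.map prod.snd)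

/-- An adjunction `L ⊣ R` between cartesian categories satisfies Frobenius reciprocity if
all the canonical maps `L(R X ⨯ W) ⟶ X ⨯ L W` are isomorphisms. -/
def IsFrobenius {L : D ⥤ E} {R : E ⥤ D} (adj : L ⊣ R) : Prop :=
  ∀ (W : D) (X : E), IsIso (frobMap adj W X)

/-- The left adjoint of the adjunction `L ⊣ R` sliced at `X`, sending `g : W ⟶ R X`
to its adjoint transpose `L W ⟶ X`. -/
def slicedL {L : D ⥤ E} {R : E ⥤ D} (adj : L ⊣ R) (X : E) : Over (R.obj X) ⥤ Over X where
  obj W := Over.mk (L.map W.hom ≫ adj.counit.app X)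
  map {W W'} u :=
    Over.homMk (L.map u.left) (by
      dsimp
      rw [← Category.assoc, ← L.map_comp, Over.w u])
  map_id W := by ext; dsimp; simp
  map_comp f g := by ext; dsimp; simp

/-- The right adjoint of the adjunction `L ⊣ R` sliced at `X`, sending `f : Y ⟶ X` to
`R f : R Y ⟶ R X`. -/
def slicedR {L : D ⥤ E} {R : E ⥤ D} (adj : L ⊣ R) (X : E) : Over X ⥤ Over (R.obj X) where
  obj Y := Over.mk (R.map Y.hom)
  map {Y Y'} u :=
    Over.homMk (R.map u.left) (by
      dsimp
      rw [← R.map_comp, Over.w u])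
  map_id Y := by ext; dsimp; simp
  map_comp f g := by ext; dsimp; simp

/-- The sliced adjunction `L_X ⊣ R_X : D / R X ⇄ E / X` of `L ⊣ R` at an object `X`. -/
def slicedAdj {L : D ⥤ E} {R : E ⥤ D} (adj : L ⊣ R) (X : E) : slicedL adj X ⊣ slicedR adj X :=
  Adjunction.mkOfHomEquiv
    { homEquiv := fun W Y =>
        { toFun := fun u => Over.homMk ((adj.homEquiv _ _) u.left) (by
            have hu := Over.w u
            dsimp [slicedL] at hu
            dsimp [slicedR]
            erw [Adjunction.homEquiv_unit]
            erw [Category.assoc, ← R.map_comp, hu, R.map_comp,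
              adj.unit_naturality_assoc, adj.right_triangle_components, Category.comp_id])
          invFun := fun v => Over.homMk ((adj.homEquiv _ _).symm v.left) (by
            have hv := Over.w v
            dsimp [slicedR] at hv
            dsimp [slicedL]
            erw [Adjunction.homEquiv_counit]
            erw [Category.assoc, ← adj.counit_naturality,
              ← Category.assoc, ← L.map_comp, hv])
          left_inv := fun u => by ext; exact (adj.homEquiv _ _).symm_apply_apply _
          right_inv := fun v => by ext; exact (adj.homEquiv _ _).apply_symm_apply _ }
      homEquiv_naturality_left_symm := by
        intro W' W Y f g
        ext
        exact adj.homEquiv_naturality_left_symm f.left g.left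
      homEquiv_naturality_right := by
        intro W Y Y' f g
        ext
        exact adj.homEquiv_naturality_right f.left g.left }

/-- An adjunction between cartesian categories is stably Frobenius if every sliced
adjunction satisfies Frobenius reciprocity. -/
def IsStablyFrobenius {L : D ⥤ E} {R : E ⥤ D} (adj : L ⊣ R) : Prop :=
  ∀ X : E, IsFrobenius (slicedAdj adj X)

end Frobenius

/-- A morphism `f : X ⟶ Y` is an effective descent morphism if the pullback functor
`f* : C/Y ⥤ C/X` is monadic. -/
def EffectiveDescentMorphism {X Y : C} (f : X ⟶ Y) : Prop :=
  Nonempty (MonadicRightAdjoint (Over.pullback f))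

/-- A principal `G`-bundle: a `G`-object `(P, p)` such that `! : P ⟶ 1` is an effective
descent morphism and `(p, π₂) : G ⨯ P ⟶ P ⨯ P` is an isomorphism. -/
def IsPrincipal (Gr : InternalGroup C) (P : InternalGroup.GObject Gr) : Prop :=
  EffectiveDescentMorphism (terminal.from P.A) ∧
    IsIso (prod.lift (InternalGroup.act P) prod.snd)

/-- The functor `C ⥤ C/P` sending `X` to the projection `P ⨯ X ⟶ P`. -/
def projFunctor (P : C) : C ⥤ Over P where
  obj X := Over.mk (prod.fst : P ⨯ X ⟶ P)
  map {X Y} f := Over.homMk (prod.map (𝟙 P) f) (by simp)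
  map_id X := by ext; dsimp; simp
  map_comp f g := by ext; dsimp; simp

theorem cofork_condition (Gr : InternalGroup C) (P : InternalGroup.GObject Gr) (X : C) :
    ((prod.associator Gr.G P.A X).inv ≫ prod.map (InternalGroup.act P) (𝟙 X)) ≫
        (prod.snd : P.A ⨯ X ⟶ X)
      = (prod.snd : Gr.G ⨯ (P.A ⨯ X) ⟶ P.A ⨯ X) ≫ prod.snd := by
  simp

/-- The object `G ⨯ X` of `C/X` underlying the internal group induced by `G` in `C/X`. -/
def overG (Gr : InternalGroup C) (X : C) : Over X := Over.mk (prod.snd : Gr.G ⨯ X ⟶ X)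

section OverGroup

variable {Gr : InternalGroup C} {X : C}

/-- The `G`-component of a morphism into `G ⨯ X` over `X`. -/
abbrev toG {A : Over X} (u : A ⟶ overG Gr X) : A.left ⟶ Gr.G := u.left ≫ prod.fst

theorem homGX_ext {A : Over X} {u v : A ⟶ overG Gr X} (h : toG u = toG v) : u = v := by
  ext
  apply Limits.prod.hom_ext
  · exact h
  · have hu := Over.w u
    have hv := Over.w v
    dsimp [overG] at hu hv
    rw [hu, hv]

theorem toG_comp {A B : Over X} (w : A ⟶ B) (u : B ⟶ overG Gr X) :
    toG (w ≫ u) = w.left ≫ toG u := by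
  dsimp [toG]
  exact Category.assoc _ _ _

variable (Gr X)

/-- The multiplication `m ⨯ id_X : (G ⨯ G) ⨯ X ⟶ G ⨯ X` of the induced group in `C/X`,
viewing `(G ⨯ X) ⨯_X (G ⨯ X) ≅ (G ⨯ G) ⨯ X`. -/
def overMul : overG Gr X ⨯ overG Gr X ⟶ overG Gr X :=
  Over.homMk
    (prod.lift
      (prod.lift (toG (prod.fst : overG Gr X ⨯ overG Gr X ⟶ overG Gr X))
        (toG (prod.snd : overG Gr X ⨯ overG Gr X ⟶ overG Gr X)) ≫ Gr.m)
      (overG Gr X ⨯ overG Gr X).hom)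
    (by simp [overG])

/-- The unit `(e ∘ !, id_X) : X ⟶ G ⨯ X` of the induced group in `C/X`. -/
def overOne : ⊤_ (Over X) ⟶ overG Gr X :=
  Over.homMk (prod.lift (terminal.from (⊤_ Over X).left ≫ Gr.e) (⊤_ Over X).hom)
    (by simp [overG])

/-- The inverse `i ⨯ id_X : G ⨯ X ⟶ G ⨯ X` of the induced group in `C/X`. -/
def overInv : overG Gr X ⟶ overG Gr X :=
  Over.homMk (prod.map Gr.i (𝟙 X)) (by simp [overG])

variable {Gr X}

theorem toG_overMul {A : Over X} (u : A ⟶ overG Gr X ⨯ overG Gr X) :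
    toG (u ≫ overMul Gr X)
      = prod.lift (toG (u ≫ prod.fst)) (toG (u ≫ prod.snd)) ≫ Gr.m := by
  rw [toG_comp]
  dsimp [overMul, toG]
  erw [prod.lift_fst]
  rw [prod.comp_lift_assoc]
  congr 2 <;> exact (Category.assoc _ _ _).symm

theorem toG_overOne {A : Over X} (u : A ⟶ ⊤_ (Over X)) :
    toG (u ≫ overOne Gr X) = terminal.from A.left ≫ Gr.e := by
  rw [toG_comp]
  dsimp [overOne, toG]
  erw [prod.lift_fst]
  rw [← Category.assoc, terminal.comp_from]

end OverGroup

/-- The internal group `G ⨯ X` in the slice category `C/X` induced by an internal group `G`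
of `C`: its multiplication is induced by `m ⨯ id_X`, its unit by `(e ∘ !, id_X)` and its
inverse by `i ⨯ id_X`. -/
def inducedGroup (Gr : InternalGroup C) (X : C) : InternalGroup (Over X) where
  G := overG Gr X
  m := overMul Gr X
  e := overOne Gr X
  i := overInv Gr X
  one_mul' := by
    apply homGX_ext
    rw [toG_overMul, prod.lift_fst, prod.lift_snd, toG_overOne]
    simp only [toG, Over.id_left, Category.id_comp]
    erw [Category.id_comp]
    exact Gr.one_mul_elt (prod.fst : Gr.G ⨯ X ⟶ Gr.G)
  mul_one' := by
    apply homGX_ext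
    rw [toG_overMul, prod.lift_fst, prod.lift_snd, toG_overOne]
    simp only [toG, Over.id_left, Category.id_comp]
    erw [Category.id_comp]
    exact Gr.mul_one_elt (prod.fst : Gr.G ⨯ X ⟶ Gr.G)
  mul_assoc' := by
    apply homGX_ext
    have l1 : ((prod.associator (overG Gr X) (overG Gr X) (overG Gr X)).inv ≫
          prod.map (overMul Gr X) (𝟙 (overG Gr X))) ≫ prod.fst
        = prod.lift prod.fst (prod.snd ≫ prod.fst) ≫ overMul Gr X := by
      rw [Category.assoc, prod.map_fst, ← Category.assoc]
      congr 1
      simp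
    have l2 : ((prod.associator (overG Gr X) (overG Gr X) (overG Gr X)).inv ≫
          prod.map (overMul Gr X) (𝟙 (overG Gr X))) ≫ prod.snd
        = prod.snd ≫ prod.snd := by
      rw [Category.assoc, prod.map_snd, Category.comp_id]
      simp
    have l3 : prod.map (𝟙 (overG Gr X)) (overMul Gr X) ≫
          (prod.fst : overG Gr X ⨯ overG Gr X ⟶ overG Gr X) = prod.fst := by
      rw [prod.map_fst, Category.comp_id]
    have l4 : prod.map (𝟙 (overG Gr X)) (overMul Gr X) ≫
          (prod.snd : overG Gr X ⨯ overG Gr X ⟶ overG Gr X)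
        = prod.snd ≫ overMul Gr X := by
      rw [prod.map_snd]
    rw [← Category.assoc, toG_overMul, l1, l2, toG_overMul, prod.lift_fst, prod.lift_snd]
    rw [toG_overMul, l3, l4, toG_overMul]
    exact Gr.mul_assoc_elt _ _ _
  inv_mul' := by
    apply homGX_ext
    rw [toG_overMul, prod.lift_fst, prod.lift_snd, toG_overOne]
    have hi : toG (overInv Gr X) = prod.fst ≫ Gr.i := by
      dsimp [overInv, toG]
      erw [prod.map_fst]
    rw [hi]
    simp only [toG, Over.id_left, Category.id_comp]
    erw [Category.id_comp]
    exact Gr.inv_mul_elt (prod.fst : Gr.G ⨯ X ⟶ Gr.G)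
  mul_inv' := by
    apply homGX_ext
    rw [toG_overMul, prod.lift_fst, prod.lift_snd, toG_overOne]
    have hi : toG (overInv Gr X) = prod.fst ≫ Gr.i := by
      dsimp [overInv, toG]
      erw [prod.map_fst]
    rw [hi]
    simp only [toG, Over.id_left, Category.id_comp]
    erw [Category.id_comp]
    exact Gr.mul_inv_elt (prod.fst : Gr.G ⨯ X ⟶ Gr.G)

/-- A principal `G`-bundle over an object `X` of `C`: a `G`-object `(P, p)` with an
action-invariant morphism `f : P ⟶ X` which is an effective descent morphism and such that
`(p, π₂) : G ⨯ P ⟶ P ⨯_X P` is an isomorphism. -/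
structure PrincipalBundleOver (Gr : InternalGroup C) (X : C) where
  P : InternalGroup.GObject Gr
  f : P.A ⟶ X
  invariant : InternalGroup.act P ≫ f = prod.snd ≫ f
  descent : EffectiveDescentMorphism f
  torsor : IsIso (pullback.lift (InternalGroup.act P) prod.snd invariant)

namespace PrincipalBundleOver

variable {Gr : InternalGroup C} {X : C}

/-- A morphism of principal `G`-bundles over `X`: a `G`-homomorphism over `X`. -/
@[ext]
structure Hom (P Q : PrincipalBundleOver Gr X) where
  hom : P.P ⟶ Q.P
  w : hom.f ≫ Q.f = P.f

/-- The category of principal `G`-bundles over `X`. -/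
instance : Category (PrincipalBundleOver Gr X) where
  Hom P Q := Hom P Q
  id P := ⟨𝟙 P.P, by rw [Monad.Algebra.id_f]; simp⟩
  comp u v := ⟨u.hom ≫ v.hom, by rw [Monad.Algebra.comp_f, Category.assoc, v.w, u.w]⟩
  id_comp u := by apply Hom.ext; simp
  comp_id u := by apply Hom.ext; simp
  assoc u v w := by apply Hom.ext; simp

end PrincipalBundleOver

/-- The category of adjunctions `L ⊣ R : C ⇄ [G, C]` over `C` (i.e. `Σ_G ∘ L ≅ Id_C`)
satisfying Frobenius reciprocity; morphisms are natural transformations between the left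
adjoints. -/
structure FrobAdjObj (Gr : InternalGroup C) (SG : InternalGroup.GObject Gr ⥤ C) where
  L : C ⥤ InternalGroup.GObject Gr
  R : InternalGroup.GObject Gr ⥤ C
  adj : L ⊣ R
  isOver : Nonempty (L ⋙ SG ≅ 𝟭 C)
  frob : IsFrobenius adj

/-- A morphism of adjunctions over `C`: a natural transformation between the left adjoints. -/
@[ext]
structure FrobAdjHom {Gr : InternalGroup C} {SG : InternalGroup.GObject Gr ⥤ C}
    (A B : FrobAdjObj Gr SG) where
  nat : A.L ⟶ B.L

instance (Gr : InternalGroup C) (SG : InternalGroup.GObject Gr ⥤ C) :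
    Category (FrobAdjObj Gr SG) where
  Hom A B := FrobAdjHom A B
  id A := ⟨𝟙 A.L⟩
  comp u v := ⟨u.nat ≫ v.nat⟩
  id_comp u := by apply FrobAdjHom.ext; simp
  comp_id u := by apply FrobAdjHom.ext; simp
  assoc u v w := by apply FrobAdjHom.ext; simp

/-- The category of adjunctions `L ⊣ R : C/X ⇄ [G, C]` over `C` (i.e. `Σ_G ∘ L ≅ Σ_X`)
that are stably Frobenius; morphisms are natural transformations between the left adjoints. -/
structure StablyFrobAdjOver (Gr : InternalGroup C) (SG : InternalGroup.GObject Gr ⥤ C)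
    (X : C) where
  L : Over X ⥤ InternalGroup.GObject Gr
  R : InternalGroup.GObject Gr ⥤ Over X
  adj : L ⊣ R
  isOver : Nonempty (L ⋙ SG ≅ Over.forget X)
  frob : IsStablyFrobenius adj

/-- A morphism of adjunctions over `C`: a natural transformation between the left adjoints. -/
@[ext]
structure StablyFrobAdjHom {Gr : InternalGroup C} {SG : InternalGroup.GObject Gr ⥤ C} {X : C}
    (A B : StablyFrobAdjOver Gr SG X) where
  nat : A.L ⟶ B.L

instance (Gr : InternalGroup C) (SG : InternalGroup.GObject Gr ⥤ C) (X : C) :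
    Category (StablyFrobAdjOver Gr SG X) where
  Hom A B := StablyFrobAdjHom A B
  id A := ⟨𝟙 A.L⟩
  comp u v := ⟨u.nat ≫ v.nat⟩
  id_comp u := by apply StablyFrobAdjHom.ext; simp
  comp_id u := by apply StablyFrobAdjHom.ext; simp
  assoc u v w := by apply StablyFrobAdjHom.ext; simp

end PrincipalBundles

open PrincipalBundles PrincipalBundles.InternalGroup
open CategoryTheory CategoryTheory.Limits

namespace Statement8Aux
open PrincipalBundles PrincipalBundles.InternalGroup CategoryTheory CategoryTheory.Limits

attribute [local simp] prod.lift_fst prod.lift_snd prod.lift_fst_assoc prod.lift_snd_assoc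

variable {C : Type u} [Category.{v} C] [HasFiniteLimits C]

theorem isIso_fst_of_isTerminal {X Y : C} (hY : IsTerminal Y) :
    IsIso (prod.fst : X ⨯ Y ⟶ X) := by
  refine ⟨prod.lift (𝟙 X) (hY.from X), ?_, by simp⟩
  apply Limits.prod.hom_ext
  · simp
  · apply hY.hom_ext

variable {Gr : InternalGroup C}

def prodGLift {A B : GObject Gr} (s : BinaryFan A B) : s.pt ⟶ prodGObject Gr A B where
  f := prod.lift s.fst.f s.snd.f
  h := by
    have hu := s.fst.h
    have hv := s.snd.h
    dsimp [actionMonad, prod.functor] at hu hv ⊢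
    dsimp [prodGObject, act]
    apply Limits.prod.hom_ext
    · erw [Category.assoc, prod.lift_fst, ← Category.assoc, prod.map_map, Category.id_comp,
        prod.lift_fst]
      erw [Category.assoc, prod.lift_fst]
      exact hu
    · erw [Category.assoc, prod.lift_snd, ← Category.assoc, prod.map_map, Category.id_comp,
        prod.lift_snd]
      erw [Category.assoc, prod.lift_snd]
      exact hv

def prodGIsLimit (A B : GObject Gr) :
    IsLimit (BinaryFan.mk (prodGFst A B) (prodGSnd A B)) :=
  BinaryFan.isLimitMk (fun s => prodGLift s)
    (fun s => by apply Monad.Algebra.Hom.ext; exact prod.lift_fst _ _)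
    (fun s => by apply Monad.Algebra.Hom.ext; exact prod.lift_snd _ _)
    (fun s m h1 h2 => by
      apply Monad.Algebra.Hom.ext
      apply Limits.prod.hom_ext
      · have h := congrArg Monad.Algebra.Hom.f h1
        simp [prodGLift, prodGFst] at h
        erw [prod.lift_fst]; exact h
      · have h := congrArg Monad.Algebra.Hom.f h2
        simp [prodGLift, prodGSnd] at h
        erw [prod.lift_snd]; exact h)

noncomputable def prodGIso (A B : GObject Gr) : prodGObject Gr A B ≅ A ⨯ B :=
  (prodGIsLimit A B).conePointUniqueUpToIso (limit.isLimit (pair A B))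

@[simp] theorem prodGIso_hom_fst (A B : GObject Gr) :
    (prodGIso A B).hom ≫ prod.fst = prodGFst A B :=
  (prodGIsLimit A B).conePointUniqueUpToIso_hom_comp (limit.isLimit (pair A B))
    ⟨WalkingPair.left⟩

@[simp] theorem prodGIso_hom_snd (A B : GObject Gr) :
    (prodGIso A B).hom ≫ prod.snd = prodGSnd A B :=
  (prodGIsLimit A B).conePointUniqueUpToIso_hom_comp (limit.isLimit (pair A B))
    ⟨WalkingPair.right⟩

@[simp] theorem prodGIso_inv_fst (A B : GObject Gr) :
    (prodGIso A B).inv ≫ prodGFst A B = prod.fst := by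
  rw [← prodGIso_hom_fst, Iso.inv_hom_id_assoc]

@[simp] theorem prodGIso_inv_snd (A B : GObject Gr) :
    (prodGIso A B).inv ≫ prodGSnd A B = prod.snd := by
  rw [← prodGIso_hom_snd, Iso.inv_hom_id_assoc]

end Statement8Aux
namespace Statement8Aux
open PrincipalBundles PrincipalBundles.InternalGroup CategoryTheory CategoryTheory.Limits

attribute [local simp] prod.lift_fst prod.lift_snd prod.lift_fst_assoc prod.lift_snd_assoc

variable {C : Type u} [Category.{v} C] [HasFiniteLimits C] {Gr : InternalGroup C}

theorem act_assoc_elt' (A : GObject Gr) {T : C} (a b : T ⟶ Gr.G) (y : T ⟶ A.A) :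
    prod.lift (prod.lift a b ≫ Gr.m) y ≫ A.a = prod.lift a (prod.lift b y ≫ A.a) ≫ A.a :=
  act_assoc_elt A a b y

theorem act_one_elt' (A : GObject Gr) {T : C} (y : T ⟶ A.A) :
    prod.lift (terminal.from T ≫ Gr.e) y ≫ A.a = y :=
  act_one_elt A y

/-- `g·(g'·x) = (gg')·x` in composed form. -/
theorem act_assoc_map (A : GObject Gr) :
    prod.map (𝟙 Gr.G) A.a ≫ A.a
      = prod.lift (prod.map (𝟙 Gr.G) prod.fst ≫ Gr.m) (prod.snd ≫ prod.snd) ≫ A.a := by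
  have e1 : prod.map (𝟙 Gr.G) A.a
      = prod.lift prod.fst (prod.lift (prod.snd ≫ prod.fst) (prod.snd ≫ prod.snd) ≫ A.a) := by
    apply Limits.prod.hom_ext
    · simp
      all_goals exact (prod.lift_fst _ _).symm
    · rw [← prod.comp_lift, prod.lift_fst_snd, Category.comp_id]
      simp
      all_goals exact (prod.lift_snd _ _).symm
  have e2 : prod.map (𝟙 Gr.G) (prod.fst : Gr.G ⨯ A.A ⟶ Gr.G)
      = prod.lift prod.fst (prod.snd ≫ prod.fst) := by
    apply Limits.prod.hom_ext
    · simp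
      all_goals exact (prod.lift_fst _ _).symm
    · simp
      all_goals exact (prod.lift_snd _ _).symm
  rw [e1, e2]
  erw [← act_assoc_elt']
  rfl

/-- The action of `G` on a `G`-object, as an equivariant map `(G,m) ⨯ G*(A) ⟶ A`. -/
def actPair (A : GObject Gr) :
    prodGObject Gr (selfAction Gr) ((trivAction Gr).obj A.A) ⟶ A where
  f := A.a
  h := by
    dsimp [actionMonad, prod.functor, prodGObject, act, selfAction, trivAction]
    erw [act_assoc_map]
    congr 1
    apply Limits.prod.hom_ext
    · simp
    · simp

theorem actPair_f (A : GObject Gr) : (actPair A).f = A.a := rfl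

/-- The translation isomorphism `(G,m) ⨯ G*(A) ≅ (G,m) ⨯ A`, `(g,a) ↦ (g, g·a)`. -/
noncomputable def transIso (A : GObject Gr) :
    prodGObject Gr (selfAction Gr) ((trivAction Gr).obj A.A)
      ≅ prodGObject Gr (selfAction Gr) A :=
  Monad.Algebra.isoMk
    (Iso.mk (prod.lift prod.fst A.a)
      (prod.lift prod.fst (prod.lift (prod.fst ≫ Gr.i) prod.snd ≫ A.a))
      (by
        dsimp only [prodGObject, trivAction, selfAction]
        apply Limits.prod.hom_ext
        · erw [Category.assoc, prod.lift_fst, prod.lift_fst, Category.id_comp]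
        · have h1 : prod.lift (prod.fst : Gr.G ⨯ A.A ⟶ Gr.G) A.a
              ≫ prod.lift (prod.fst ≫ Gr.i) prod.snd ≫ A.a
            = prod.lift (prod.fst ≫ Gr.i) (prod.lift prod.fst prod.snd ≫ A.a) ≫ A.a := by
            erw [← Category.assoc, prod.comp_lift, prod.lift_fst_assoc, prod.lift_snd,
              prod.lift_fst_snd, Category.id_comp]
          erw [Category.assoc, prod.lift_snd, h1, ← act_assoc_elt',
            inv_mul_elt Gr (prod.fst : Gr.G ⨯ A.A ⟶ Gr.G), act_one_elt']
          simp)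
      (by
        dsimp only [prodGObject, trivAction, selfAction]
        apply Limits.prod.hom_ext
        · erw [Category.assoc, prod.lift_fst, prod.lift_fst, Category.id_comp]
        · erw [Category.assoc, prod.lift_snd, ← act_assoc_elt',
            mul_inv_elt Gr (prod.fst : Gr.G ⨯ A.A ⟶ Gr.G), act_one_elt']
          simp))
    (by
      dsimp [actionMonad, prod.functor, prodGObject, act, selfAction, trivAction]
      apply Limits.prod.hom_ext
      · simp only [Category.assoc, prod.lift_fst, prod.map_map_assoc, Category.id_comp,
          Category.comp_id, prod.comp_lift_assoc, prod.lift_snd]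
        all_goals erw [prod.lift_fst, prod.lift_fst]
      · simp only [Category.assoc, prod.lift_snd, prod.comp_lift_assoc, prod.lift_fst]
        rw [← Category.assoc, prod.map_map, Category.id_comp]
        erw [prod.lift_snd]
        erw [act_assoc_map]
        congr 1
        apply Limits.prod.hom_ext
        all_goals simp)

end Statement8Aux
namespace Statement8Aux
open PrincipalBundles PrincipalBundles.InternalGroup CategoryTheory CategoryTheory.Limits

attribute [local simp] prod.lift_fst prod.lift_snd prod.lift_fst_assoc prod.lift_snd_assoc

variable {C : Type u} [Category.{v} C] [HasFiniteLimits C] {Gr : InternalGroup C}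

/-- `(G, m)` is the free algebra on the terminal object. -/
noncomputable def freeTopIso : (actionMonad Gr).free.obj (⊤_ C) ≅ selfAction Gr :=
  Monad.Algebra.isoMk (prod.rightUnitor Gr.G)
    (by
      dsimp [actionMonad, prod.functor, selfAction]
      show prod.map (𝟙 Gr.G) prod.fst ≫ Gr.m
        = (prod.lift (prod.lift prod.fst (prod.snd ≫ prod.fst)) (prod.snd ≫ prod.snd)
          ≫ prod.map Gr.m (𝟙 (⊤_ C))) ≫ prod.fst
      rw [Category.assoc, prod.map_fst, ← Category.assoc, prod.lift_fst]
      congr 1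
      apply Limits.prod.hom_ext
      all_goals simp)

variable (SG : GObject Gr ⥤ C) (SGadj : SG ⊣ trivAction Gr)

/-- `Σ_G (G, m)` is terminal. -/
noncomputable def sgSelfTerminal : IsTerminal (SG.obj (selfAction Gr)) := by
  have e : trivAction Gr ⋙ (actionMonad Gr).forget ≅ 𝟭 C :=
    NatIso.ofComponents (fun X => Iso.refl _) (by intros; erw [Category.comp_id, Category.id_comp]; rfl)
  have adjc : (actionMonad Gr).free ⋙ SG ⊣ 𝟭 C :=
    (((actionMonad Gr).adj).comp SGadj).ofNatIsoRight e
  have l : (actionMonad Gr).free ⋙ SG ≅ 𝟭 C := adjc.leftAdjointUniq Adjunction.id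
  exact IsTerminal.ofIso terminalIsTerminal
    ((l.app (⊤_ C)).symm ≪≫ SG.mapIso freeTopIso)

variable (L : C ⥤ GObject Gr) (R : GObject Gr ⥤ C) (adj : L ⊣ R)

/-- The Frobenius isomorphism `L(R X) ≅ X ⨯ L 1`. -/
noncomputable def PhiIso (hfrob : IsFrobenius adj) (X : GObject Gr) :
    L.obj (R.obj X) ≅ X ⨯ L.obj (⊤_ C) :=
  letI := hfrob (⊤_ C) X
  L.mapIso (prod.rightUnitor (R.obj X)).symm ≪≫ asIso (frobMap adj (⊤_ C) X)

theorem PhiIso_hom_fst (hfrob : IsFrobenius adj) (X : GObject Gr) :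
    (PhiIso L R adj hfrob X).hom ≫ prod.fst = adj.counit.app X := by
  dsimp [PhiIso, frobMap]
  erw [Category.assoc, prod.lift_fst, ← Category.assoc, ← L.map_comp,
    prod.lift_fst, L.map_id, Category.id_comp]

theorem PhiIso_hom_snd (hfrob : IsFrobenius adj) (X : GObject Gr) :
    (PhiIso L R adj hfrob X).hom ≫ prod.snd = L.map (terminal.from (R.obj X)) := by
  dsimp [PhiIso, frobMap]
  erw [Category.assoc, prod.lift_snd, ← L.map_comp]
  congr 1
  apply Subsingleton.elim

end Statement8Aux
namespace Statement8Aux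
open PrincipalBundles PrincipalBundles.InternalGroup CategoryTheory CategoryTheory.Limits

attribute [local simp] prod.lift_fst prod.lift_snd prod.lift_fst_assoc prod.lift_snd_assoc

variable {C : Type u} [Category.{v} C] [HasFiniteLimits C] {Gr : InternalGroup C}
variable (SG : GObject Gr ⥤ C) (SGadj : SG ⊣ trivAction Gr)
variable (L : C ⥤ GObject Gr) (R : GObject Gr ⥤ C) (adj : L ⊣ R)

section OverC
variable (hover : L ⋙ SG = 𝟭 C)

/-- The canonical map `L W ⟶ G* W`, transpose of the identification `Σ_G L W = W`. -/
noncomputable def sigmaHom (W : C) : L.obj W ⟶ (trivAction Gr).obj W :=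
  (SGadj.homEquiv (L.obj W) W) (eqToHom (Functor.congr_obj hover W))

/-- The canonical map `W ⟶ R(G* W)`, transpose of `sigmaHom`. -/
noncomputable def nuHom (W : C) : W ⟶ R.obj ((trivAction Gr).obj W) :=
  (adj.homEquiv W ((trivAction Gr).obj W)) (sigmaHom SG SGadj L hover W)

/-- A retraction of `nuHom`, built from the two Frobenius maps. -/
noncomputable def muHom (hfrob : IsFrobenius adj) (W : C) :
    R.obj ((trivAction Gr).obj W) ⟶ W :=
  eqToHom (Functor.congr_obj hover (R.obj ((trivAction Gr).obj W))).symm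
    ≫ SG.map (PhiIso L R adj hfrob ((trivAction Gr).obj W)).hom
    ≫ frobMap SGadj (L.obj (⊤_ C)) W ≫ prod.fst

theorem nu_mu (hfrob : IsFrobenius adj) (W : C) :
    nuHom SG SGadj L R adj hover W ≫ muHom SG SGadj L R adj hover hfrob W = 𝟙 W := by
  dsimp only [muHom]
  have h1 : frobMap SGadj (L.obj (⊤_ C)) W ≫ prod.fst
      = SG.map prod.fst ≫ SGadj.counit.app W := by
    dsimp [frobMap]; rw [prod.lift_fst]
  rw [h1, ← Functor.map_comp_assoc, PhiIso_hom_fst]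
  have hν : nuHom SG SGadj L R adj hover W
      = (adj.homEquiv W ((trivAction Gr).obj W)) (sigmaHom SG SGadj L hover W) := rfl
  have hc : nuHom SG SGadj L R adj hover W
        ≫ eqToHom (Functor.congr_obj hover (R.obj ((trivAction Gr).obj W))).symm
      = eqToHom (Functor.congr_obj hover W).symm
        ≫ SG.map (L.map (nuHom SG SGadj L R adj hover W)) := by
    have h2 := Functor.congr_hom hover (nuHom SG SGadj L R adj hover W)
    simp only [Functor.comp_map, Functor.id_map] at h2
    rw [h2]
    simp
  rw [← Category.assoc, hc, Category.assoc, ← Functor.map_comp_assoc]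
  have h3 : L.map (nuHom SG SGadj L R adj hover W) ≫ adj.counit.app ((trivAction Gr).obj W)
      = sigmaHom SG SGadj L hover W := by
    rw [hν]
    have h := adj.homEquiv_counit (X := W) (Y := (trivAction Gr).obj W)
      (g := (adj.homEquiv W ((trivAction Gr).obj W)) (sigmaHom SG SGadj L hover W))
    rw [Equiv.symm_apply_apply] at h
    exact h.symm
  rw [h3]
  have h4 : SG.map (sigmaHom SG SGadj L hover W) ≫ SGadj.counit.app W
      = eqToHom (Functor.congr_obj hover W) := by
    dsimp only [sigmaHom]
    have h := SGadj.homEquiv_counit (X := L.obj W) (Y := W)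
      (g := (SGadj.homEquiv (L.obj W) W) (eqToHom (Functor.congr_obj hover W)))
    rw [Equiv.symm_apply_apply] at h
    exact h.symm
  rw [h4]
  simp

theorem isIso_nu (hSG : IsFrobenius SGadj) (hfrob : IsFrobenius adj) (W : C) :
    IsIso (nuHom SG SGadj L R adj hover W) := by
  have hμ : IsIso (muHom SG SGadj L R adj hover hfrob W) := by
    dsimp only [muHom]
    haveI : IsIso (frobMap SGadj (L.obj (⊤_ C)) W) := hSG _ _
    haveI : IsIso (prod.fst : W ⨯ SG.obj (L.obj (⊤_ C)) ⟶ W) := by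
      apply isIso_fst_of_isTerminal
      exact IsTerminal.ofIso terminalIsTerminal
        (eqToIso (Functor.congr_obj hover (⊤_ C)).symm)
    infer_instance
  haveI : IsIso (nuHom SG SGadj L R adj hover W ≫ muHom SG SGadj L R adj hover hfrob W) := by
    rw [nu_mu SG SGadj L R adj hover hfrob W]
    infer_instance
  exact IsIso.of_isIso_comp_right _ (muHom SG SGadj L R adj hover hfrob W)

end OverC
end Statement8Aux
namespace Statement8Aux
open PrincipalBundles PrincipalBundles.InternalGroup CategoryTheory CategoryTheory.Limits

attribute [local simp] prod.lift_fst prod.lift_snd prod.lift_fst_assoc prod.lift_snd_assoc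

variable {C : Type u} [Category.{v} C] [HasFiniteLimits C] {Gr : InternalGroup C}
variable (SG : GObject Gr ⥤ C) (SGadj : SG ⊣ trivAction Gr)
variable (L : C ⥤ GObject Gr) (R : GObject Gr ⥤ C) (adj : L ⊣ R)

section OverC2
variable (hover : L ⋙ SG = 𝟭 C)

/-- The canonical map `L W ⟶ L1 ⨯ G* W`. -/
noncomputable def cHom (W : C) : L.obj W ⟶ L.obj (⊤_ C) ⨯ (trivAction Gr).obj W :=
  prod.lift (L.map (terminal.from W)) (sigmaHom SG SGadj L hover W)

theorem c_eq (hfrob : IsFrobenius adj) (W : C) :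
    cHom SG SGadj L hover W
      = L.map (nuHom SG SGadj L R adj hover W)
        ≫ (PhiIso L R adj hfrob ((trivAction Gr).obj W)).hom
        ≫ (prod.braiding ((trivAction Gr).obj W) (L.obj (⊤_ C))).hom := by
  have hLnu : L.map (nuHom SG SGadj L R adj hover W)
      ≫ adj.counit.app ((trivAction Gr).obj W) = sigmaHom SG SGadj L hover W := by
    have h := adj.homEquiv_counit (X := W) (Y := (trivAction Gr).obj W)
      (g := (adj.homEquiv W ((trivAction Gr).obj W)) (sigmaHom SG SGadj L hover W))
    rw [Equiv.symm_apply_apply] at h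
    exact h.symm
  dsimp only [cHom, prod.braiding]
  apply Limits.prod.hom_ext
  · rw [prod.lift_fst, Category.assoc, Category.assoc, prod.lift_fst,
      ← Category.assoc, Category.assoc, PhiIso_hom_snd, ← L.map_comp, terminal.comp_from]
  · rw [prod.lift_snd, Category.assoc, Category.assoc, prod.lift_snd,
      ← Category.assoc, Category.assoc, PhiIso_hom_fst, hLnu]

theorem isIso_c (hSG : IsFrobenius SGadj) (hfrob : IsFrobenius adj) (W : C) :
    IsIso (cHom SG SGadj L hover W) := by
  rw [c_eq SG SGadj L R adj hover hfrob W]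
  haveI := isIso_nu SG SGadj L R adj hover hSG hfrob W
  infer_instance

end OverC2
end Statement8Aux
namespace Statement8Aux
open PrincipalBundles PrincipalBundles.InternalGroup CategoryTheory CategoryTheory.Limits

attribute [local simp] prod.lift_fst prod.lift_snd prod.lift_fst_assoc prod.lift_snd_assoc

variable {C : Type u} [Category.{v} C] [HasFiniteLimits C] {Gr : InternalGroup C}
variable (SG : GObject Gr ⥤ C) (SGadj : SG ⊣ trivAction Gr)
variable (L : C ⥤ GObject Gr) (R : GObject Gr ⥤ C) (adj : L ⊣ R)

/-- The translation isomorphism on categorical products. -/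
noncomputable def EIso :
    (selfAction Gr ⨯ (trivAction Gr).obj (L.obj (⊤_ C)).A : GObject Gr)
      ≅ selfAction Gr ⨯ L.obj (⊤_ C) :=
  (prodGIso (selfAction Gr) ((trivAction Gr).obj (L.obj (⊤_ C)).A)).symm
    ≪≫ transIso (L.obj (⊤_ C)) ≪≫ prodGIso (selfAction Gr) (L.obj (⊤_ C))

/-- The action map `(G,m) ⨯ G* P ⟶ L 1` on categorical products. -/
noncomputable def qHat :
    (selfAction Gr ⨯ (trivAction Gr).obj (L.obj (⊤_ C)).A : GObject Gr) ⟶ L.obj (⊤_ C) :=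
  (prodGIso (selfAction Gr) ((trivAction Gr).obj (L.obj (⊤_ C)).A)).inv
    ≫ actPair (L.obj (⊤_ C))

theorem EIso_hom_snd : (EIso L).hom ≫ prod.snd = qHat L := by
  dsimp only [EIso, qHat, Iso.trans_hom, Iso.symm_hom]
  rw [Category.assoc, Category.assoc, prodGIso_hom_snd]
  congr 1
  apply Monad.Algebra.Hom.ext
  rw [Monad.Algebra.comp_f]
  dsimp [transIso, prodGSnd, actPair]
  erw [prod.lift_snd]

theorem EIso_inv_qHat : (EIso L).inv ≫ qHat L = prod.snd := by
  rw [← EIso_hom_snd, Iso.inv_hom_id_assoc]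

/-- The torsor map on categorical products. -/
noncomputable def ThetaCat :
    (selfAction Gr ⨯ (trivAction Gr).obj (L.obj (⊤_ C)).A : GObject Gr)
      ⟶ L.obj (⊤_ C) ⨯ (trivAction Gr).obj (L.obj (⊤_ C)).A :=
  prod.lift (qHat L) prod.snd

section Main
variable (hover : L ⋙ SG = 𝟭 C) (hfrob : IsFrobenius adj)

/-- The second component of the comparison of `ThetaCat` with `cHom`. -/
noncomputable def kappaHom : L.obj (R.obj (selfAction Gr)) ⟶ (trivAction Gr).obj (L.obj (⊤_ C)).A :=
  (PhiIso L R adj hfrob (selfAction Gr)).hom ≫ (EIso L).inv ≫ prod.snd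

/-- The canonical isomorphism `R (G, m) ≅ P`. -/
noncomputable def jHom : R.obj (selfAction Gr) ⟶ (L.obj (⊤_ C)).A :=
  eqToHom (Functor.congr_obj hover (R.obj (selfAction Gr))).symm
    ≫ (SGadj.homEquiv (L.obj (R.obj (selfAction Gr))) (L.obj (⊤_ C)).A).symm
        (kappaHom L R adj hfrob)

theorem jHom_eq :
    jHom SG SGadj L R adj hover hfrob
      = eqToHom (Functor.congr_obj hover (R.obj (selfAction Gr))).symm
        ≫ SG.map (PhiIso L R adj hfrob (selfAction Gr)).hom
        ≫ SG.map (EIso L).inv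
        ≫ (SG.map
            (prod.snd :
              (selfAction Gr ⨯ (trivAction Gr).obj (L.obj (⊤_ C)).A : GObject Gr)
                ⟶ (trivAction Gr).obj (L.obj (⊤_ C)).A)
          ≫ SGadj.counit.app (L.obj (⊤_ C)).A) := by
  dsimp only [jHom, kappaHom]
  rw [SGadj.homEquiv_counit, SG.map_comp, SG.map_comp]
  simp only [Category.assoc]

theorem isIso_sg_snd_counit (hSG : IsFrobenius SGadj) :
    IsIso (SG.map
            (prod.snd :
              (selfAction Gr ⨯ (trivAction Gr).obj (L.obj (⊤_ C)).A : GObject Gr)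
                ⟶ (trivAction Gr).obj (L.obj (⊤_ C)).A)
          ≫ SGadj.counit.app (L.obj (⊤_ C)).A) := by
  have heq : SG.map (prod.braiding (selfAction Gr)
          ((trivAction Gr).obj (L.obj (⊤_ C)).A)).hom
        ≫ frobMap SGadj (selfAction Gr) (L.obj (⊤_ C)).A ≫ prod.fst
      = SG.map prod.snd ≫ SGadj.counit.app (L.obj (⊤_ C)).A := by
    dsimp only [frobMap]
    rw [prod.lift_fst, ← Functor.map_comp_assoc]
    dsimp only [prod.braiding]
    rw [prod.lift_fst]
  rw [← heq]
  haveI : IsIso (frobMap SGadj (selfAction Gr) (L.obj (⊤_ C)).A) := hSG _ _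
  haveI : IsIso (prod.fst : (L.obj (⊤_ C)).A ⨯ SG.obj (selfAction Gr) ⟶ (L.obj (⊤_ C)).A) :=
    isIso_fst_of_isTerminal (sgSelfTerminal SG SGadj)
  infer_instance

theorem isIso_j (hSG : IsFrobenius SGadj) : IsIso (jHom SG SGadj L R adj hover hfrob) := by
  rw [jHom_eq]
  haveI := isIso_sg_snd_counit SG SGadj L hSG
  infer_instance

theorem sigma_j :
    sigmaHom SG SGadj L hover (R.obj (selfAction Gr))
        ≫ (trivAction Gr).map (jHom SG SGadj L R adj hover hfrob)
      = kappaHom L R adj hfrob := by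
  dsimp only [sigmaHom]
  have h := SGadj.homEquiv_naturality_right
    (f := (eqToHom (Functor.congr_obj hover (R.obj (selfAction Gr))) :
      SG.obj (L.obj (R.obj (selfAction Gr))) ⟶ R.obj (selfAction Gr)))
    (g := jHom SG SGadj L R adj hover hfrob)
  rw [← h]
  dsimp only [jHom]
  rw [eqToHom_trans_assoc, eqToHom_refl, Category.id_comp, Equiv.apply_symm_apply]

theorem psi_eq :
    (PhiIso L R adj hfrob (selfAction Gr)).hom ≫ (EIso L).inv ≫ ThetaCat L
      = cHom SG SGadj L hover (R.obj (selfAction Gr))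
        ≫ prod.map (𝟙 (L.obj (⊤_ C))) ((trivAction Gr).map (jHom SG SGadj L R adj hover hfrob)) := by
  apply Limits.prod.hom_ext
  · rw [Category.assoc, Category.assoc, Category.assoc, prod.map_fst]
    dsimp only [ThetaCat]
    rw [prod.lift_fst, EIso_inv_qHat, PhiIso_hom_snd]
    dsimp only [cHom]
    rw [Category.comp_id, prod.lift_fst]
  · rw [Category.assoc, Category.assoc, Category.assoc, prod.map_snd]
    dsimp only [ThetaCat]
    rw [prod.lift_snd]
    dsimp only [cHom]
    rw [prod.lift_snd_assoc, sigma_j SG SGadj L R adj hover hfrob]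
    rfl

include R adj hover hfrob in
theorem isIso_thetaCat (hSG : IsFrobenius SGadj) : IsIso (ThetaCat L) := by
  have h := psi_eq SG SGadj L R adj hover hfrob
  have h2 : ThetaCat L
      = (EIso L).hom ≫ (PhiIso L R adj hfrob (selfAction Gr)).inv
        ≫ (cHom SG SGadj L hover (R.obj (selfAction Gr))
          ≫ prod.map (𝟙 (L.obj (⊤_ C)))
              ((trivAction Gr).map (jHom SG SGadj L R adj hover hfrob))) := by
    rw [← h]
    simp only [Iso.inv_hom_id_assoc, Iso.hom_inv_id_assoc]
  rw [h2]
  haveI := isIso_c SG SGadj L R adj hover hSG hfrob (R.obj (selfAction Gr))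
  haveI := isIso_j SG SGadj L R adj hover hfrob hSG
  infer_instance

end Main

theorem Theta_f :
    ((prodGIso (selfAction Gr) ((trivAction Gr).obj (L.obj (⊤_ C)).A)).hom
      ≫ ThetaCat L
      ≫ (prodGIso (L.obj (⊤_ C)) ((trivAction Gr).obj (L.obj (⊤_ C)).A)).inv).f
    = prod.lift (act (L.obj (⊤_ C))) prod.snd := by
  apply Limits.prod.hom_ext
  · have t1 : (prodGIso (selfAction Gr) ((trivAction Gr).obj (L.obj (⊤_ C)).A)).hom
        ≫ ThetaCat L
        ≫ (prodGIso (L.obj (⊤_ C)) ((trivAction Gr).obj (L.obj (⊤_ C)).A)).inv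
        ≫ prodGFst (L.obj (⊤_ C)) ((trivAction Gr).obj (L.obj (⊤_ C)).A)
        = actPair (L.obj (⊤_ C)) := by
      rw [prodGIso_inv_fst]
      dsimp only [ThetaCat]
      rw [prod.lift_fst]
      dsimp only [qHat]
      rw [Iso.hom_inv_id_assoc]
    have t1f := congrArg Monad.Algebra.Hom.f t1
    simp only [Monad.Algebra.comp_f, Category.assoc] at t1f
    dsimp only [prodGFst, actPair] at t1f
    simp only [Monad.Algebra.comp_f, Category.assoc]
    erw [Category.assoc, Category.assoc]
    exact (t1f.trans ((prod.lift_fst (act (L.obj (⊤_ C))) prod.snd).symm))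
  · have t2 : (prodGIso (selfAction Gr) ((trivAction Gr).obj (L.obj (⊤_ C)).A)).hom
        ≫ ThetaCat L
        ≫ (prodGIso (L.obj (⊤_ C)) ((trivAction Gr).obj (L.obj (⊤_ C)).A)).inv
        ≫ prodGSnd (L.obj (⊤_ C)) ((trivAction Gr).obj (L.obj (⊤_ C)).A)
        = prodGSnd (selfAction Gr) ((trivAction Gr).obj (L.obj (⊤_ C)).A) := by
      rw [prodGIso_inv_snd]
      dsimp only [ThetaCat]
      rw [prod.lift_snd, prodGIso_hom_snd]
    have t2f := congrArg Monad.Algebra.Hom.f t2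
    simp only [Monad.Algebra.comp_f, Category.assoc] at t2f
    dsimp only [prodGSnd] at t2f
    simp only [Monad.Algebra.comp_f, Category.assoc]
    erw [Category.assoc, Category.assoc]
    exact (t2f.trans ((prod.lift_snd (act (L.obj (⊤_ C))) prod.snd).symm))

theorem torsor (hover : L ⋙ SG = 𝟭 C) (hSG : IsFrobenius SGadj) (hfrob : IsFrobenius adj) :
    IsIso (prod.lift (act (L.obj (⊤_ C))) prod.snd) := by
  haveI := isIso_thetaCat SG SGadj L R adj hover hfrob hSG
  haveI : IsIso ((prodGIso (selfAction Gr) ((trivAction Gr).obj (L.obj (⊤_ C)).A)).hom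
      ≫ ThetaCat L
      ≫ (prodGIso (L.obj (⊤_ C)) ((trivAction Gr).obj (L.obj (⊤_ C)).A)).inv) := by
    infer_instance
  have h : IsIso (((actionMonad Gr).forget).map
      ((prodGIso (selfAction Gr) ((trivAction Gr).obj (L.obj (⊤_ C)).A)).hom
        ≫ ThetaCat L
        ≫ (prodGIso (L.obj (⊤_ C)) ((trivAction Gr).obj (L.obj (⊤_ C)).A)).inv)) :=
    inferInstance
  have h2 : IsIso ((prodGIso (selfAction Gr) ((trivAction Gr).obj (L.obj (⊤_ C)).A)).hom
        ≫ ThetaCat L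
        ≫ (prodGIso (L.obj (⊤_ C)) ((trivAction Gr).obj (L.obj (⊤_ C)).A)).inv).f := h
  rw [Theta_f L] at h2
  exact h2

end Statement8Aux
/-- If `Σ_G ⊣ G*` satisfies Frobenius reciprocity and `L ⊣ R : C ⇄ [G, C]` is
an adjunction over `C` satisfying Frobenius reciprocity, with `(P, p) = L 1`, then
`R (G, m) ≅ P` and `(p, π₂) : G ⨯ P ⟶ P ⨯ P` is an isomorphism. -/
theorem statement8 {C : Type u} [Category.{v} C] [HasFiniteLimits C] (Gr : InternalGroup C)
    (SG : GObject Gr ⥤ C) (SGadj : SG ⊣ trivAction Gr) (hSG : IsFrobenius SGadj)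
    (L : C ⥤ GObject Gr) (R : GObject Gr ⥤ C) (adj : L ⊣ R) (hover : L ⋙ SG = 𝟭 C)
    (hfrob : IsFrobenius adj) :
    Nonempty (R.obj (selfAction Gr) ≅ (L.obj (⊤_ C)).A) ∧
    IsIso (prod.lift (act (L.obj (⊤_ C))) prod.snd) := by
  constructor
  · haveI := Statement8Aux.isIso_j SG SGadj L R adj hover hfrob hSG
    exact ⟨asIso (Statement8Aux.jHom SG SGadj L R adj hover hfrob)⟩
  · exact Statement8Aux.torsor SG SGadj L R adj hover hSG hfrob
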